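/- With ω*(δ) = sqrt((−δ² + sqrt(δ⁴ + 4γ²δ²))/2) and d*(δ) = arcsin(ω*(δ)/γ)/ω*(δ) for fixed γ > 0: as δ → ∞, d*(δ) → π/(2γ), and as δ → 0⁺, d*(δ) → 1/γ. -/

import Mathlib

open Real Filter

set_option maxHeartbeats 800000

lemma inner_eq (γ : ℝ) (hγ : 0 < γ) {δ : ℝ} (hδ : 0 < δ) :
    (-δ ^ 2 + Real.sqrt (δ ^ 4 + 4 * γ ^ 2 * δ ^ 2)) / 2
      = 2 * γ ^ 2 / (Real.sqrt (1 + 4 * γ ^ 2 / δ ^ 2) + 1) := by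
  have ht : (0:ℝ) ≤ 1 + 4 * γ ^ 2 / δ ^ 2 := by positivity
  have h1 : δ ^ 4 + 4 * γ ^ 2 * δ ^ 2 = (δ ^ 2) ^ 2 * (1 + 4 * γ ^ 2 / δ ^ 2) := by
    field_simp
  have h2 : Real.sqrt (δ ^ 4 + 4 * γ ^ 2 * δ ^ 2)
      = δ ^ 2 * Real.sqrt (1 + 4 * γ ^ 2 / δ ^ 2) := by
    rw [h1, Real.sqrt_mul (by positivity), Real.sqrt_sq (by positivity)]
  have hs : Real.sqrt (1 + 4 * γ ^ 2 / δ ^ 2) ^ 2 = 1 + 4 * γ ^ 2 / δ ^ 2 :=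
    Real.sq_sqrt ht
  have hpos : 0 < Real.sqrt (1 + 4 * γ ^ 2 / δ ^ 2) + 1 := by positivity
  rw [h2, eq_div_iff hpos.ne']
  have hδ2 : (δ:ℝ) ^ 2 ≠ 0 := by positivity
  have key : (-δ ^ 2 + δ ^ 2 * Real.sqrt (1 + 4 * γ ^ 2 / δ ^ 2)) / 2
      * (Real.sqrt (1 + 4 * γ ^ 2 / δ ^ 2) + 1)
      = δ ^ 2 * (Real.sqrt (1 + 4 * γ ^ 2 / δ ^ 2) ^ 2 - 1) / 2 := by ring
  rw [key, hs]
  field_simp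
  ring

theorem critical_delay_limits (γ : ℝ) (hγ : 0 < γ) :
    let ωs : ℝ → ℝ := fun δ =>
      Real.sqrt ((-δ ^ 2 + Real.sqrt (δ ^ 4 + 4 * γ ^ 2 * δ ^ 2)) / 2)
    let ds : ℝ → ℝ := fun δ => Real.arcsin (ωs δ / γ) / ωs δ
    Tendsto ds atTop (nhds (Real.pi / (2 * γ))) ∧
      Tendsto ds (nhdsWithin 0 (Set.Ioi 0)) (nhds (1 / γ)) := by
  intro ωs ds
  have hγ' : γ ≠ 0 := ne_of_gt hγ
  -- ωs is positive on Ioi 0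
  have hωpos : ∀ δ : ℝ, 0 < δ → 0 < ωs δ := by
    intro δ hδ
    have h1 : (δ ^ 2 : ℝ) < Real.sqrt (δ ^ 4 + 4 * γ ^ 2 * δ ^ 2) := by
      rw [Real.lt_sqrt (by positivity)]
      nlinarith [mul_pos (pow_pos hγ 2) (pow_pos hδ 2)]
    exact Real.sqrt_pos.mpr (by linarith)
  constructor
  · -- δ → ∞
    have hinner : Tendsto (fun δ : ℝ =>
        (-δ ^ 2 + Real.sqrt (δ ^ 4 + 4 * γ ^ 2 * δ ^ 2)) / 2) atTop (nhds (γ ^ 2)) := by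
      have heq : ∀ᶠ δ : ℝ in atTop,
          (-δ ^ 2 + Real.sqrt (δ ^ 4 + 4 * γ ^ 2 * δ ^ 2)) / 2
            = 2 * γ ^ 2 / (Real.sqrt (1 + 4 * γ ^ 2 / δ ^ 2) + 1) := by
        filter_upwards [eventually_gt_atTop (0:ℝ)] with δ hδ using inner_eq γ hγ hδ
      rw [Filter.tendsto_congr' heq]
      have h0 : Tendsto (fun δ : ℝ => 4 * γ ^ 2 / δ ^ 2) atTop (nhds 0) := by
        have hp : Tendsto (fun δ : ℝ => δ ^ 2) atTop atTop :=
          tendsto_pow_atTop (by norm_num : (2:ℕ) ≠ 0)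
        exact Tendsto.div_atTop tendsto_const_nhds hp
      have h1 : Tendsto (fun δ : ℝ => Real.sqrt (1 + 4 * γ ^ 2 / δ ^ 2) + 1)
          atTop (nhds 2) := by
        have h1' : Tendsto (fun δ : ℝ => 1 + 4 * γ ^ 2 / δ ^ 2) atTop (nhds 1) := by
          simpa using h0.const_add 1
        have h2 : Tendsto (fun δ : ℝ => Real.sqrt (1 + 4 * γ ^ 2 / δ ^ 2)) atTop (nhds 1) := by
          have := (Real.continuous_sqrt.tendsto (1:ℝ)).comp h1'
          simpa [Function.comp_def] using this
        have h3 := h2.add (tendsto_const_nhds (x := (1:ℝ)))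
        norm_num at h3
        exact h3
      have := (tendsto_const_nhds (x := 2 * γ ^ 2) (f := atTop (α := ℝ))).div h1 two_ne_zero
      convert this using 2
      · rfl
      · ring
    have hω : Tendsto ωs atTop (nhds γ) := by
      have h := (Real.continuous_sqrt.tendsto (γ ^ 2)).comp hinner
      rw [Real.sqrt_sq hγ.le] at h
      exact h
    have hcont : ContinuousAt (fun x : ℝ => Real.arcsin (x / γ) / x) γ := by
      exact ContinuousAt.div ((Real.continuous_arcsin.continuousAt).comp
        (continuousAt_id.div continuousAt_const hγ')) continuousAt_id hγ'
    have := hcont.tendsto.comp hω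
    simpa [ds, Function.comp_def, div_self hγ', Real.arcsin_one,
      div_div, mul_comm] using this
  · -- δ → 0⁺
    have hω0 : Tendsto ωs (nhdsWithin 0 (Set.Ioi 0)) (nhds 0) := by
      have hc : ContinuousAt ωs 0 := by
        apply Real.continuous_sqrt.continuousAt.comp
        fun_prop
      have := hc.tendsto.mono_left (nhdsWithin_le_nhds (s := Set.Ioi (0:ℝ)))
      simpa [ωs] using this
    have hu : Tendsto (fun δ => ωs δ / γ) (nhdsWithin 0 (Set.Ioi 0))
        (nhdsWithin 0 {0}ᶜ) := by
      rw [tendsto_nhdsWithin_iff]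
      constructor
      · simpa using hω0.div_const γ
      · filter_upwards [self_mem_nhdsWithin] with δ hδ
        exact ne_of_gt (div_pos (hωpos δ hδ) hγ)
    have harcsin : HasDerivAt Real.arcsin 1 0 := by
      have := Real.hasDerivAt_arcsin (x := 0) (by norm_num) (by norm_num)
      simpa using this
    have hslope : Tendsto (slope Real.arcsin 0) (nhdsWithin 0 {0}ᶜ) (nhds 1) :=
      hasDerivAt_iff_tendsto_slope.mp harcsin
    have hcomp := (hslope.comp hu).div_const γ
    have heq : ∀ᶠ δ in nhdsWithin (0:ℝ) (Set.Ioi 0),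
        (slope Real.arcsin 0) (ωs δ / γ) / γ = ds δ := by
      filter_upwards [self_mem_nhdsWithin] with δ hδ
      have hω := hωpos δ hδ
      simp only [slope_def_field, ds, Real.arcsin_zero, sub_zero]
      rw [div_div, div_mul_cancel₀ _ hγ']
    simp only [Function.comp_def] at hcomp
    rw [Filter.tendsto_congr' heq] at hcomp
    simpa using hcomp
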